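/- With β the evolute-direction curve (β' = sin(θ)N + cos(θ)B, θ' = τ) of a unit-speed curve γ with κ > 0, the ratio τ_β/κ_β equals -cot(θ). Consequently, τ_β/κ_β is constant if and only if θ is constant, i.e., if and only if τ ≡ 0. -/

import Mathlib

open Real

/-- for the evolute-direction curve, `τ_β/κ_β = -cot θ`;
it is constant iff θ is constant iff `τ ≡ 0`. -/
theorem evolute_direction_helix_ratio
    (κ τ θ : ℝ → ℝ)
    (hκ : ∀ s, 0 < κ s)
    (hθ : ∀ s, HasDerivAt θ (τ s) s)
    (hsin : ∀ s, sin (θ s) ≠ 0)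
    (κβ τβ : ℝ → ℝ)
    (hκβ : ∀ s, κβ s = -(κ s) * sin (θ s))
    (hτβ : ∀ s, τβ s = κ s * cos (θ s)) :
    (∀ s, τβ s / κβ s = -(cos (θ s) / sin (θ s))) ∧
    ((∃ c, ∀ s, τβ s / κβ s = c) ↔ (∃ c, ∀ s, θ s = c)) ∧
    ((∃ c, ∀ s, θ s = c) ↔ ∀ s, τ s = 0) := by
  have hratio : ∀ s, τβ s / κβ s = -(cos (θ s) / sin (θ s)) := by
    intro s
    rw [hκβ, hτβ]
    have hκs := (hκ s).ne'
    rw [show -κ s * sin (θ s) = -(κ s * sin (θ s)) by ring, div_neg,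
      mul_div_mul_left _ _ hκs]
  -- derivative of cot ∘ θ
  have hcot : ∀ s, HasDerivAt (fun s => cos (θ s) / sin (θ s))
      (-(τ s) / sin (θ s) ^ 2) s := by
    intro s
    have h : HasDerivAt (fun s => cos (θ s) / sin (θ s)) _ s :=
      ((hθ s).cos.div (hθ s).sin (hsin s))
    convert h using 1
    congr 1
    linear_combination (τ s) * sin_sq_add_cos_sq (θ s)
  have hτ0_of_const : (∃ c, ∀ s, θ s = c) → ∀ s, τ s = 0 := by
    rintro ⟨c, hc⟩ s
    have h1 : HasDerivAt θ 0 s := by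
      have : θ = fun _ => c := funext hc
      rw [this]; exact hasDerivAt_const _ _
    exact ((hθ s).unique h1)
  have hconst_of_τ0 : (∀ s, τ s = 0) → ∃ c, ∀ s, θ s = c := by
    intro hτ
    refine ⟨θ 0, fun s => ?_⟩
    have : ∀ x, HasDerivAt θ 0 x := fun x => hτ x ▸ hθ x
    exact is_const_of_deriv_eq_zero (fun x => (this x).differentiableAt)
      (fun x => (this x).deriv) s 0
  refine ⟨hratio, ⟨?_, ?_⟩, ⟨hτ0_of_const, hconst_of_τ0⟩⟩
  · rintro ⟨c, hc⟩
    apply hconst_of_τ0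
    intro s
    have hconst : (fun s => cos (θ s) / sin (θ s)) = fun _ => -c := by
      funext x
      have := (hratio x).symm.trans (hc x)
      linarith
    have h0 : HasDerivAt (fun s => cos (θ s) / sin (θ s)) 0 s := by
      rw [hconst]; exact hasDerivAt_const _ _
    have := (hcot s).unique h0
    have hs2 : sin (θ s) ^ 2 ≠ 0 := pow_ne_zero _ (hsin s)
    field_simp at this
    simpa [hs2, hsin s] using this
  · rintro ⟨c, hc⟩
    exact ⟨-(cos c / sin c), fun s => by rw [hratio s, hc s]⟩
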